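/- Let G₁ = (V, E₁) and G₂ = (V, E₂) be simple graphs on the vertex set V = Fin n with E₁ ∩ E₂ = ∅, and let A₁, A₂, and A be the real {0,1}-valued adjacency matrices of G₁, G₂, and the graph G = (V, E₁ ∪ E₂), respectively. If A₁ is constructible in k₁ pulses and A₂ is constructible in k₂ pulses, then A is constructible in k₁ + k₂ pulses. -/

import Mathlib

open Matrix

/-- The intrinsic coupling matrix `J` with `J i j = 1` for `i ≠ j` and `0` on the diagonal. -/
def Jmat (n : ℕ) : Matrix (Fin n) (Fin n) ℝ :=
  fun i j => if i = j then 0 else 1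

/-- `A` is constructible in `k` pulses: there are `P ∈ {-1,1}^{k×n}` and a diagonal
`W ∈ ℝ^{k×k}` with `Pᵀ W P ⊙ J = A`. -/
def Constructible (n k : ℕ) (A : Matrix (Fin n) (Fin n) ℝ) : Prop :=
  ∃ (P : Matrix (Fin k) (Fin n) ℝ) (W : Matrix (Fin k) (Fin k) ℝ),
    (∀ a i, P a i = 1 ∨ P a i = -1) ∧ W.IsDiag ∧
      (Pᵀ * W * P).hadamard (Jmat n) = A

theorem stmt_1 (n k₁ k₂ : ℕ) (hn : 1 ≤ n)
    (G₁ G₂ : SimpleGraph (Fin n)) [DecidableRel G₁.Adj] [DecidableRel G₂.Adj]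
    [DecidableRel (G₁ ⊔ G₂).Adj]
    (hdisj : Disjoint G₁.edgeSet G₂.edgeSet)
    (h₁ : Constructible n k₁ (G₁.adjMatrix ℝ))
    (h₂ : Constructible n k₂ (G₂.adjMatrix ℝ)) :
    Constructible n (k₁ + k₂) ((G₁ ⊔ G₂).adjMatrix ℝ) := by
  obtain ⟨P₁, W₁, hP₁, hW₁, hA₁⟩ := h₁
  obtain ⟨P₂, W₂, hP₂, hW₂, hA₂⟩ := h₂
  set P : Matrix (Fin (k₁ + k₂)) (Fin n) ℝ := Fin.append P₁ P₂ with hP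
  set W : Matrix (Fin (k₁ + k₂)) (Fin (k₁ + k₂)) ℝ :=
    Fin.append (fun i => Fin.append (W₁ i) 0) (fun i => Fin.append 0 (W₂ i)) with hW
  refine ⟨P, W, ?_, ?_, ?_⟩
  · intro a i
    refine Fin.addCases (fun a => ?_) (fun a => ?_) a
    · have e : P (Fin.castAdd k₂ a) = P₁ a := Fin.append_left _ _ _
      rw [e]; exact hP₁ a i
    · have e : P (Fin.natAdd k₁ a) = P₂ a := Fin.append_right _ _ _
      rw [e]; exact hP₂ a i
  · intro a b
    refine Fin.addCases (fun a => ?_) (fun a => ?_) a <;>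
      refine Fin.addCases (fun b => ?_) (fun b => ?_) b <;> intro hab <;>
      simp [hW, Fin.append_left, Fin.append_right]
    · exact hW₁ fun h => hab (congrArg (Fin.castAdd k₂) h)
    · exact hW₂ fun h => hab (congrArg (Fin.natAdd k₁) h)
  · have hsum : Pᵀ * W * P = P₁ᵀ * W₁ * P₁ + P₂ᵀ * W₂ * P₂ := by
      ext i j
      simp only [Matrix.mul_apply, Matrix.transpose_apply, Matrix.add_apply,
        Finset.sum_mul, Finset.mul_sum]
      have e1 : ∀ a, P (Fin.castAdd k₂ a) = P₁ a := fun a => Fin.append_left _ _ _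
      have e2 : ∀ a, P (Fin.natAdd k₁ a) = P₂ a := fun a => Fin.append_right _ _ _
      have f1 : ∀ a b, W (Fin.castAdd k₂ a) (Fin.castAdd k₂ b) = W₁ a b := fun a b => by
        simp [hW, Fin.append_left]
      have f2 : ∀ a b, W (Fin.castAdd k₂ a) (Fin.natAdd k₁ b) = 0 := fun a b => by
        simp [hW, Fin.append_left, Fin.append_right]
      have f3 : ∀ a b, W (Fin.natAdd k₁ a) (Fin.castAdd k₂ b) = 0 := fun a b => by
        simp [hW, Fin.append_left, Fin.append_right]
      have f4 : ∀ a b, W (Fin.natAdd k₁ a) (Fin.natAdd k₁ b) = W₂ a b := fun a b => by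
        simp [hW, Fin.append_right]
      rw [Fin.sum_univ_add]
      simp [Fin.sum_univ_add, e1, e2, f1, f2, f3, f4]
    have hadj : (G₁ ⊔ G₂).adjMatrix ℝ = G₁.adjMatrix ℝ + G₂.adjMatrix ℝ := by
      ext i j
      by_cases h1 : G₁.Adj i j <;> by_cases h2 : G₂.Adj i j <;>
        simp [SimpleGraph.adjMatrix_apply, h1, h2]
      exact absurd (G₂.mem_edgeSet.mpr h2) (Set.disjoint_left.mp hdisj (G₁.mem_edgeSet.mpr h1))
    rw [hsum, Matrix.add_hadamard, hA₁, hA₂, hadj]
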